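/- For every integer k ≥ 3 and every ε > 0, the modified instance I_k(1+ε) with demands d_0 = 1+ε and d_i = 1 for i = 1,…,k−1 admits no multi-commodity flow over time without intermediate storage whose time horizon T satisfies T ≤ 2k−2. -/
import Mathlib


open MeasureTheory Set

/-- A multi-commodity flow over time with time horizon `T` for the cycle instance with `k` nodes
`v_0, …, v_{k-1}`, arcs `a_j = (v_j, v_{(j+1) % k})` of unit capacity and unit transit time,
`k` commodities where commodity `i` has source `v_i`, sink `v_{(i-1) % k}` and demand `d i`.
`f i j` is the flow rate function of commodity `i` into arc `a_j`. -/
def IsMCFlow (k : ℕ) (T : ℝ) (d : ℕ → ℝ) (f : ℕ → ℕ → ℝ → ℝ) : Prop :=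
  -- positive time horizon
  0 < T ∧
  -- integrable flow rate functions
  (∀ i < k, ∀ j < k, Integrable (f i j)) ∧
  -- nonnegative flow rates
  (∀ i < k, ∀ j < k, ∀ θ : ℝ, 0 ≤ f i j θ) ∧
  -- flow rates vanish outside [0, T)
  (∀ i < k, ∀ j < k, ∀ θ : ℝ, θ ∉ Ico (0 : ℝ) T → f i j θ = 0) ∧
  -- capacity constraints, for almost every time
  (∀ j < k, ∀ᵐ θ : ℝ, ∑ i ∈ Finset.range k, f i j θ ≤ 1) ∧
  -- weak flow conservation: flow can only emerge from the source `v_i` of commodity `i`;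
  -- node `v_m` has unique incoming arc `a_{(m-1) % k}` and unique outgoing arc `a_m`
  (∀ i < k, ∀ m < k, m ≠ i → ∀ θ ∈ Ico (0 : ℝ) T,
    0 ≤ (∫ ξ in (0 : ℝ)..(θ - 1), f i ((m + k - 1) % k) ξ) -
        ∫ ξ in (0 : ℝ)..θ, f i m ξ) ∧
  -- demands are fulfilled at time `T`
  (∀ i < k, ∀ m < k,
    (∫ ξ in (0 : ℝ)..(T - 1), f i ((m + k - 1) % k) ξ) -
        (∫ ξ in (0 : ℝ)..T, f i m ξ) =
      if m = (i + k - 1) % k then d i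
      else if m = i then -d i
      else 0)

/-- The flow is without intermediate storage: flow conservation holds with equality at every
node other than the source `v_i` and the sink `v_{(i-1) % k}` of each commodity `i`. -/
def NoStorage (k : ℕ) (T : ℝ) (f : ℕ → ℕ → ℝ → ℝ) : Prop :=
  ∀ i < k, ∀ m < k, m ≠ i → m ≠ (i + k - 1) % k → ∀ θ ∈ Ico (0 : ℝ) T,
    (∫ ξ in (0 : ℝ)..(θ - 1), f i ((m + k - 1) % k) ξ) =
      ∫ ξ in (0 : ℝ)..θ, f i m ξ

/-- The demands of the instance `I_k`: commodity `0` has demand `2`,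
all other commodities have demand `1`. -/
noncomputable def demandI (i : ℕ) : ℝ := if i = 0 then 2 else 1


lemma aux_shift (k i r : ℕ) (hk : 0 < k) :
    ((i + (r + 1)) % k + k - 1) % k = (i + r) % k := by
  have h1 : (i + (r + 1)) % k + k - 1 = (i + (r + 1)) % k + (k - 1) := by omega
  rw [h1, Nat.mod_add_mod]
  have h2 : i + (r + 1) + (k - 1) = (i + r) + k := by omega
  rw [h2, Nat.add_mod_right]

lemma aux_sink_shift (k i : ℕ) (hk : 2 ≤ k) :
    ((i + k - 1) % k + k - 1) % k = (i + (k - 2)) % k := by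
  have h1 : (i + k - 1) % k + k - 1 = (i + k - 1) % k + (k - 1) := by omega
  rw [h1, Nat.mod_add_mod]
  have h2 : i + k - 1 + (k - 1) = (i + (k - 2)) + k := by omega
  rw [h2, Nat.add_mod_right]

lemma aux_ne_self (k i r : ℕ) (hi : i < k) (h1 : 1 ≤ r) (h2 : r < k) :
    (i + r) % k ≠ i := by
  intro h
  have hmod : i % k = (i + r) % k := by rw [h, Nat.mod_eq_of_lt hi]
  have hdvd : k ∣ (i + r) - i := (Nat.modEq_iff_dvd' (Nat.le_add_right i r)).mp hmod
  have hdvd' : k ∣ r := by simpa using hdvd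
  have := Nat.le_of_dvd (by omega) hdvd'
  omega

lemma aux_ne_sink (k i r : ℕ) (hk : 0 < k) (hr : r + 1 ≤ k - 1) :
    (i + r) % k ≠ (i + k - 1) % k := by
  intro h
  have h' : i + k - 1 = i + (k - 1) := by omega
  rw [h'] at h
  have hdvd : k ∣ (i + (k - 1)) - (i + r) := (Nat.modEq_iff_dvd' (by omega)).mp h
  have h2 : i + (k - 1) - (i + r) = k - 1 - r := by omega
  rw [h2] at hdvd
  have := Nat.le_of_dvd (by omega) hdvd
  omega

lemma aux_inj (k i r1 r2 : ℕ) (h1 : r1 < k) (h2 : r2 < k)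
    (h : (i + r1) % k = (i + r2) % k) : r1 = r2 := by
  rcases le_total r1 r2 with hle | hle
  · have hdvd : k ∣ (i + r2) - (i + r1) := (Nat.modEq_iff_dvd' (by omega)).mp h
    have h3 : i + r2 - (i + r1) = r2 - r1 := by omega
    rw [h3] at hdvd
    rcases Nat.eq_zero_or_pos (r2 - r1) with h0 | h0
    · omega
    · have := Nat.le_of_dvd h0 hdvd; omega
  · have hdvd : k ∣ (i + r1) - (i + r2) := (Nat.modEq_iff_dvd' (by omega)).mp h.symm
    have h3 : i + r1 - (i + r2) = r1 - r2 := by omega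
    rw [h3] at hdvd
    rcases Nat.eq_zero_or_pos (r1 - r2) with h0 | h0
    · omega
    · have := Nat.le_of_dvd h0 hdvd; omega

noncomputable def cumul (f : ℕ → ℕ → ℝ → ℝ) (i j : ℕ) (θ : ℝ) : ℝ :=
  ∫ ξ in (0 : ℝ)..θ, f i j ξ

lemma cumul_def (f : ℕ → ℕ → ℝ → ℝ) (i j : ℕ) (θ : ℝ) :
    cumul f i j θ = ∫ ξ in (0 : ℝ)..θ, f i j ξ := rfl

/-- For every `k ≥ 3` and `ε > 0`, the modified instance `I_k(1+ε)` with demands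
`d 0 = 1 + ε` and `d i = 1` for `i ≥ 1` admits no multi-commodity flow over time without
intermediate storage whose time horizon `T` satisfies `T ≤ 2k - 2`. -/
theorem perturbed_demand_no_storage_horizon_gt (k : ℕ) (hk : 3 ≤ k) (ε : ℝ) (hε : 0 < ε)
    (T : ℝ) (f : ℕ → ℕ → ℝ → ℝ)
    (hf : IsMCFlow k T (fun i => if i = 0 then 1 + ε else 1) f)
    (hns : NoStorage k T f) :
    2 * (k : ℝ) - 2 < T := by
  by_contra hcon
  push_neg at hcon
  unfold IsMCFlow at hf
  unfold NoStorage at hns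
  obtain ⟨hT0, hint, hpos, hsupp, hcap, _hcons, hdem⟩ := hf
  simp only [← cumul_def] at hdem hns
  have hk0 : 0 < k := by omega
  have hII : ∀ i < k, ∀ j < k, ∀ a b : ℝ, IntervalIntegrable (f i j) volume a b :=
    fun i hi j hj a b => (hint i hi j hj).intervalIntegrable
  have hdiff : ∀ i < k, ∀ j < k, ∀ a b : ℝ,
      cumul f i j b - cumul f i j a = ∫ ξ in a..b, f i j ξ := fun i hi j hj a b =>
    intervalIntegral.integral_interval_sub_left (hII i hi j hj 0 b) (hII i hi j hj 0 a)
  have hmono : ∀ i < k, ∀ j < k, ∀ a b : ℝ, a ≤ b → cumul f i j a ≤ cumul f i j b := by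
    intro i hi j hj a b hab
    have h1 : 0 ≤ ∫ ξ in a..b, f i j ξ :=
      intervalIntegral.integral_nonneg hab (fun u _ => hpos i hi j hj u)
    have h2 := hdiff i hi j hj a b
    linarith
  have hF0 : ∀ i < k, ∀ j < k, ∀ θ : ℝ, θ ≤ 0 → cumul f i j θ = 0 := by
    intro i hi j hj θ hθ
    have hz : ∀ ξ ∈ Ioo θ (0 : ℝ), f i j ξ = 0 := by
      intro ξ hξ
      exact hsupp i hi j hj ξ (fun hmem => absurd hmem.1 (not_le.mpr hξ.2))
    have h1 : (∫ ξ in θ..(0 : ℝ), f i j ξ) = 0 := by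
      rw [intervalIntegral.integral_of_le hθ, MeasureTheory.integral_Ioc_eq_integral_Ioo]
      exact MeasureTheory.setIntegral_eq_zero_of_forall_eq_zero hz
    rw [cumul_def, intervalIntegral.integral_symm, h1, neg_zero]
  -- Claim A : propagation of flow along the cycle
  have claimA : ∀ r, r ≤ k - 2 → ∀ i < k, ∀ θ : ℝ, θ ≤ T →
      cumul f i ((i + r) % k) θ = cumul f i i (θ - (r : ℝ)) := by
    intro r
    induction r with
    | zero =>
      intro _ i hi θ hθ
      rw [Nat.add_zero, Nat.mod_eq_of_lt hi]
      norm_num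
    | succ r ih =>
      intro hr i hi θ hθ
      have hrk : r ≤ k - 2 := by omega
      have hm : (i + (r + 1)) % k < k := Nat.mod_lt _ hk0
      have hm' : (i + r) % k < k := Nat.mod_lt _ hk0
      have hne1 : (i + (r + 1)) % k ≠ i := aux_ne_self k i (r + 1) hi (by omega) (by omega)
      have hne2 : (i + (r + 1)) % k ≠ (i + k - 1) % k := aux_ne_sink k i (r + 1) hk0 (by omega)
      have hshift := aux_shift k i r hk0
      have key : cumul f i ((i + (r + 1)) % k) θ = cumul f i ((i + r) % k) (θ - 1) := by
        rcases lt_or_ge θ 0 with h0 | h0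
        · rw [hF0 i hi _ hm θ h0.le, hF0 i hi _ hm' (θ - 1) (by linarith)]
        · rcases eq_or_lt_of_le hθ with hTeq | hTlt
          · have hd := hdem i hi ((i + (r + 1)) % k) hm
            rw [if_neg hne2, if_neg hne1, hshift] at hd
            rw [hTeq]
            linarith
          · have hd := hns i hi ((i + (r + 1)) % k) hm hne1 hne2 θ ⟨h0, hTlt⟩
            rw [hshift] at hd
            linarith
      rw [key, ih hrk i hi (θ - 1) (by linarith)]
      congr 1
      push_cast
      ring
  -- Claim B : demand reaches the source arc early
  have claimB : ∀ i < k, (if i = 0 then 1 + ε else 1) ≤ cumul f i i (T - ((k : ℝ) - 1)) := by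
    intro i hi
    have hm0 : (i + k - 1) % k < k := Nat.mod_lt _ hk0
    have hd := hdem i hi ((i + k - 1) % k) hm0
    rw [if_pos rfl, aux_sink_shift k i (by omega)] at hd
    have hA := claimA (k - 2) le_rfl i hi (T - 1) (by linarith)
    have hcast : ((k - 2 : ℕ) : ℝ) = (k : ℝ) - 2 := by
      rw [Nat.cast_sub (by omega : 2 ≤ k)]; norm_num
    have harg : T - 1 - ((k - 2 : ℕ) : ℝ) = T - ((k : ℝ) - 1) := by rw [hcast]; ring
    rw [harg] at hA
    have hnn : 0 ≤ cumul f i ((i + k - 1) % k) T := by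
      have h1 := hmono i hi _ hm0 0 T hT0.le
      have h2 : cumul f i ((i + k - 1) % k) 0 = 0 := by
        rw [cumul_def, intervalIntegral.integral_same]
      linarith
    rw [hA] at hd
    linarith
  set W : ℝ := min T ((k : ℝ) - 1) with hW
  have hWT : W ≤ T := min_le_left _ _
  have hWk : W ≤ (k : ℝ) - 1 := min_le_right _ _
  have hk3 : (3 : ℝ) ≤ (k : ℝ) := by exact_mod_cast hk
  have hSW : T - ((k : ℝ) - 1) ≤ W := le_min (by linarith) (by linarith)
  -- Claim C : per-commodity lower bound in the window [W-1, W]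
  have claimC : ∀ i < k, (if i = 0 then 1 + ε else 1) ≤
      ∑ j ∈ Finset.range k, (cumul f i j W - cumul f i j (W - 1)) := by
    intro i hi
    have hsum1 : ∑ r ∈ Finset.range (k - 1),
        (cumul f i ((i + r) % k) W - cumul f i ((i + r) % k) (W - 1)) =
        cumul f i i W := by
      have htele : ∑ r ∈ Finset.range (k - 1),
          ((fun r : ℕ => cumul f i i (W - (r : ℝ))) r -
           (fun r : ℕ => cumul f i i (W - (r : ℝ))) (r + 1)) =
          cumul f i i (W - ((0 : ℕ) : ℝ)) - cumul f i i (W - ((k - 1 : ℕ) : ℝ)) :=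
        Finset.sum_range_sub' (fun r : ℕ => cumul f i i (W - (r : ℝ))) (k - 1)
      have hcongr : ∀ r ∈ Finset.range (k - 1),
          cumul f i ((i + r) % k) W - cumul f i ((i + r) % k) (W - 1) =
          (fun r : ℕ => cumul f i i (W - (r : ℝ))) r -
          (fun r : ℕ => cumul f i i (W - (r : ℝ))) (r + 1) := by
        intro r hr
        have hrk : r ≤ k - 2 := by
          have := Finset.mem_range.mp hr; omega
        have e1 := claimA r hrk i hi W hWT
        have e2 := claimA r hrk i hi (W - 1) (by linarith)
        rw [e1, e2]
        have : W - 1 - (r : ℝ) = W - ((r + 1 : ℕ) : ℝ) := by push_cast; ring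
        rw [this]
      rw [Finset.sum_congr rfl hcongr, htele]
      have hz : cumul f i i (W - ((k - 1 : ℕ) : ℝ)) = 0 := by
        apply hF0 i hi i hi
        have : ((k - 1 : ℕ) : ℝ) = (k : ℝ) - 1 := by
          rw [Nat.cast_sub (by omega : 1 ≤ k)]; norm_num
        rw [this]; linarith
      rw [hz]
      norm_num
    have hle1 : ∑ r ∈ Finset.range (k - 1),
        (cumul f i ((i + r) % k) W - cumul f i ((i + r) % k) (W - 1)) ≤
        ∑ j ∈ Finset.range k, (cumul f i j W - cumul f i j (W - 1)) := by
      have hrw : ∑ r ∈ Finset.range (k - 1),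
          (cumul f i ((i + r) % k) W - cumul f i ((i + r) % k) (W - 1)) =
          ∑ j ∈ (Finset.range (k - 1)).image (fun r => (i + r) % k),
            (cumul f i j W - cumul f i j (W - 1)) := by
        rw [Finset.sum_image]
        intro x hx y hy hxy
        exact aux_inj k i x y (by have := Finset.mem_range.mp hx; omega)
          (by have := Finset.mem_range.mp hy; omega) hxy
      rw [hrw]
      apply Finset.sum_le_sum_of_subset_of_nonneg
      · intro j hj
        simp only [Finset.mem_image, Finset.mem_range] at hj
        obtain ⟨r, _, hr⟩ := hj
        simp only [Finset.mem_range]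
        rw [← hr]
        exact Nat.mod_lt _ hk0
      · intro j hj _
        have hjk := Finset.mem_range.mp hj
        have := hmono i hi j hjk (W - 1) W (by linarith)
        linarith
    have hB := claimB i hi
    have hmB := hmono i hi i hi (T - ((k : ℝ) - 1)) W hSW
    linarith
  -- capacity bound per arc
  have capj : ∀ j < k, ∑ i ∈ Finset.range k, (cumul f i j W - cumul f i j (W - 1)) ≤ 1 := by
    intro j hj
    have hintsum : Integrable (fun θ => ∑ i ∈ Finset.range k, f i j θ) volume :=
      MeasureTheory.integrable_finset_sum _ (fun i hi => hint i (Finset.mem_range.mp hi) j hj)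
    have h1 : (∫ θ in (W - 1)..W, ∑ i ∈ Finset.range k, f i j θ) ≤
        ∫ θ in (W - 1)..W, (1 : ℝ) := by
      apply intervalIntegral.integral_mono_ae (by linarith) hintsum.intervalIntegrable
        intervalIntegrable_const
      exact hcap j hj
    rw [intervalIntegral.integral_finset_sum
      (fun i hi => hII i (Finset.mem_range.mp hi) j hj (W - 1) W)] at h1
    have h2 : (∫ θ in (W - 1)..W, (1 : ℝ)) = 1 := by
      rw [intervalIntegral.integral_const]
      norm_num
    rw [h2] at h1
    calc ∑ i ∈ Finset.range k, (cumul f i j W - cumul f i j (W - 1))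
        = ∑ i ∈ Finset.range k, ∫ ξ in (W - 1)..W, f i j ξ :=
          Finset.sum_congr rfl (fun i hi => hdiff i (Finset.mem_range.mp hi) j hj _ _)
      _ ≤ 1 := h1
  -- put it all together
  have htotal : ∑ i ∈ Finset.range k, (if i = 0 then 1 + ε else (1 : ℝ)) ≤ (k : ℝ) := by
    calc ∑ i ∈ Finset.range k, (if i = 0 then 1 + ε else (1 : ℝ))
        ≤ ∑ i ∈ Finset.range k, ∑ j ∈ Finset.range k,
            (cumul f i j W - cumul f i j (W - 1)) :=
          Finset.sum_le_sum (fun i hi => claimC i (Finset.mem_range.mp hi))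
      _ = ∑ j ∈ Finset.range k, ∑ i ∈ Finset.range k,
            (cumul f i j W - cumul f i j (W - 1)) := Finset.sum_comm
      _ ≤ ∑ j ∈ Finset.range k, 1 :=
          Finset.sum_le_sum (fun j hj => capj j (Finset.mem_range.mp hj))
      _ = (k : ℝ) := by simp
  have hsumd : ∑ i ∈ Finset.range k, (if i = 0 then 1 + ε else (1 : ℝ)) = (k : ℝ) + ε := by
    have : ∀ i : ℕ, (if i = 0 then 1 + ε else (1 : ℝ)) = 1 + (if i = 0 then ε else 0) := by
      intro i; split <;> ring
    rw [Finset.sum_congr rfl (fun i _ => this i), Finset.sum_add_distrib,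
      Finset.sum_ite_eq' (Finset.range k) 0 (fun _ => ε)]
    simp [hk0]
  rw [hsumd] at htotal
  linarith
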